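/- Let P = {x ∈ ℝⁿ : Ax = b, Bx ≤ d} be a pointed integral polyhedron (all of its vertices have integer coordinates) whose stacked constraint matrix (A; B) is totally unimodular. Then every circuit walk in P is integral, i.e., every point yⁱ of every circuit walk in P has integer components. -/

import Mathlib

/-!
STATEMENT 2: In a pointed integral polyhedron P = {x : A x = b, B x ≤ d} whose stacked
constraint matrix (A; B) is totally unimodular, every circuit walk is integral.
-/

open Matrix

/-- The polyhedron `{x ∈ ℝⁿ : A x = b, B x ≤ d}`. -/
def PolyAB {mA mB n : ℕ} (A : Matrix (Fin mA) (Fin n) ℝ) (b : Fin mA → ℝ)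
    (B : Matrix (Fin mB) (Fin n) ℝ) (d : Fin mB → ℝ) : Set (Fin n → ℝ) :=
  {x | A.mulVec x = b ∧ ∀ i, B.mulVec x i ≤ d i}

/-- A real vector with integer components whose greatest common divisor is 1. -/
def IsCoprimeIntegerVec {n : ℕ} (g : Fin n → ℝ) : Prop :=
  ∃ gz : Fin n → ℤ, (∀ i, g i = (gz i : ℝ)) ∧ Finset.univ.gcd gz = 1

/-- `g` is a circuit of the system `A x = b`, `B x ≤ d`:  `g ∈ ker A \ {0}` with coprime integer
components such that `B g` is support-minimal over `{B x : x ∈ ker A \ {0}}`. -/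
def IsCircuit {mA mB n : ℕ} (A : Matrix (Fin mA) (Fin n) ℝ)
    (B : Matrix (Fin mB) (Fin n) ℝ) (g : Fin n → ℝ) : Prop :=
  A.mulVec g = 0 ∧ g ≠ 0 ∧ IsCoprimeIntegerVec g ∧
    ¬ ∃ y : Fin n → ℝ, A.mulVec y = 0 ∧ y ≠ 0 ∧
      {i | B.mulVec y i ≠ 0} ⊂ {i | B.mulVec g i ≠ 0}

/-- A circuit walk: a sequence of points of `P` starting and ending at vertices,
each step a maximal step along a circuit direction. -/
def IsCircuitWalk {n : ℕ} (P : Set (Fin n → ℝ)) (Circ : (Fin n → ℝ) → Prop)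
    {k : ℕ} (y : Fin (k + 1) → Fin n → ℝ) : Prop :=
  y 0 ∈ P.extremePoints ℝ ∧ y (Fin.last k) ∈ P.extremePoints ℝ ∧
  ∀ i : Fin k, y i.castSucc ∈ P ∧
    ∃ (g : Fin n → ℝ) (α : ℝ), Circ g ∧ 0 < α ∧
      y i.succ = y i.castSucc + α • g ∧
      ∀ β : ℝ, α < β → y i.castSucc + β • g ∉ P


/-- A circuit walk is integral if all of its points have integer components. -/
def IsIntegralWalk {n k : ℕ} (y : Fin (k + 1) → Fin n → ℝ) : Prop :=
  ∀ i j, ∃ z : ℤ, y i j = (z : ℝ)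


lemma exists_good_submatrix {ι : Type} [Fintype ι] {n : ℕ} (N : Matrix ι (Fin n) ℝ)
    (hker : ∀ x, N.mulVec x = 0 → x = 0) :
    ∃ f : Fin n → ι, Function.Injective f ∧ (N.submatrix f id).det ≠ 0 := by
  classical
  -- rows of N span ℝⁿ
  have hktriv : LinearMap.ker N.mulVecLin = ⊥ := by
    rw [LinearMap.ker_eq_bot']
    intro x hx
    exact hker x hx
  have hrank : N.rank = n := by
    have h1 := LinearMap.finrank_range_add_finrank_ker N.mulVecLin
    rw [hktriv, finrank_bot, add_zero] at h1
    rw [Matrix.rank, h1]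
    simp
  have hspan : Submodule.span ℝ (Set.range N) = ⊤ := by
    have h2 : (Nᵀ).rank = n := by rw [Matrix.rank_transpose]; exact hrank
    have h3 : LinearMap.range (Nᵀ).mulVecLin = Submodule.span ℝ (Set.range N) := by
      rw [Matrix.range_mulVecLin]; rfl
    apply Submodule.eq_top_of_finrank_eq
    rw [← h3]
    rw [Matrix.rank] at h2
    rw [h2]
    simp
  obtain ⟨bs, hsub, hspan2, hind⟩ := exists_linearIndependent ℝ (Set.range N)
  rw [hspan] at hspan2
  haveI : Fintype bs := ((Set.finite_range N).subset hsub).fintype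
  have hb : Module.Basis bs ℝ (Fin n → ℝ) := Module.Basis.mk hind (by rw [Subtype.range_coe_subtype, Set.setOf_mem_eq, hspan2])
  have hcard : Fintype.card bs = n := by
    have := Module.finrank_eq_card_basis hb
    simp at this
    rw [← Nat.card_coe_set_eq, Nat.card_eq_fintype_card] at this
    omega
  have e : Fin n ≃ bs := (Fintype.equivFinOfCardEq hcard).symm
  have hchoose : ∀ v : bs, ∃ i : ι, N i = (v : Fin n → ℝ) := fun v => hsub v.2
  choose idx hidx using hchoose
  refine ⟨fun k => idx (e k), ?_, ?_⟩
  · intro k1 k2 hk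
    have : N (idx (e k1)) = N (idx (e k2)) := congrArg N hk
    rw [hidx, hidx] at this
    exact e.injective (Subtype.ext this)
  · -- rows of sub matrix are linearly independent
    set Q := N.submatrix (fun k => idx (e k)) id with hQ
    have hrow : ∀ k, Q k = ((e k : bs) : Fin n → ℝ) := by
      intro k; ext j; simp [hQ, Matrix.submatrix_apply, hidx]
    have hindQ : LinearIndependent ℝ (fun k => Q k) := by
      have : (fun k => Q k) = (fun v : bs => (v : Fin n → ℝ)) ∘ e := by
        funext k; rw [hrow]; rfl
      rw [this]
      exact hind.comp e e.injective
    intro hdet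
    have hdetT : (Qᵀ).det = 0 := by rw [Matrix.det_transpose]; exact hdet
    obtain ⟨v, hv0, hv⟩ := (Matrix.exists_mulVec_eq_zero_iff).mpr hdetT
    apply hv0
    have hvm : ∀ j, ∑ k, v k * Q k j = 0 := by
      intro j
      have := congrFun hv j
      rw [Matrix.mulVec, dotProduct] at this
      simpa [Matrix.transpose_apply, mul_comm] using this
    have := Fintype.linearIndependent_iff.mp hindQ v (by
      funext j
      simpa [Finset.sum_apply] using hvm j)
    funext k; exact this k

lemma circuit_ratio_int {mA mB n : ℕ} {A : Matrix (Fin mA) (Fin n) ℝ}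
    {B : Matrix (Fin mB) (Fin n) ℝ}
    (hTU : (Matrix.fromRows A B).IsTotallyUnimodular)
    (hker : ∀ z, A.mulVec z = 0 → B.mulVec z = 0 → z = 0)
    {g : Fin n → ℝ} (hAg : A.mulVec g = 0) (hg0 : g ≠ 0)
    (hmin : ¬ ∃ y : Fin n → ℝ, A.mulVec y = 0 ∧ y ≠ 0 ∧
      {i | B.mulVec y i ≠ 0} ⊂ {i | B.mulVec g i ≠ 0})
    {j0 : Fin mB} (hj0 : B.mulVec g j0 ≠ 0) :
    ∃ hz : Fin n → ℤ, ∀ l, g l = (hz l : ℝ) * B.mulVec g j0 := by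
  classical
  set c : ℝ := B.mulVec g j0 with hc
  -- claim (a) : anything in ker A whose B-image is supported in supp (B g) is a multiple of g
  have span1 : ∀ x : Fin n → ℝ, A.mulVec x = 0 → (∀ j, B.mulVec g j = 0 → B.mulVec x j = 0) →
      ∃ t : ℝ, x = t • g := by
    intro x hAx hsupp
    by_cases hx0 : x = 0
    · exact ⟨0, by simp [hx0]⟩
    have hsub : {i | B.mulVec x i ≠ 0} ⊆ {i | B.mulVec g i ≠ 0} := by
      intro j hj
      simp only [Set.mem_setOf_eq] at *
      intro hgj
      exact hj (hsupp j hgj)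
    have heq : {i | B.mulVec x i ≠ 0} = {i | B.mulVec g i ≠ 0} := by
      rcases hsub.eq_or_ssubset with h | h
      · exact h
      · exact absurd ⟨x, hAx, hx0, h⟩ hmin
    -- j0 has B g j0 ≠ 0 hence B x j0 ≠ 0
    have hxj0 : B.mulVec x j0 ≠ 0 := by
      have : j0 ∈ {i | B.mulVec g i ≠ 0} := hj0
      rw [← heq] at this
      exact this
    -- w := c • x - (B x j0) • g  kills coordinate j0
    set w : Fin n → ℝ := c • x - (B.mulVec x j0) • g with hw
    have hAw : A.mulVec w = 0 := by
      rw [hw, Matrix.mulVec_sub, Matrix.mulVec_smul, Matrix.mulVec_smul, hAx, hAg]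
      simp
    have hBw : ∀ j, B.mulVec w j = c * B.mulVec x j - B.mulVec x j0 * B.mulVec g j := by
      intro j
      rw [hw, Matrix.mulVec_sub, Matrix.mulVec_smul, Matrix.mulVec_smul]
      simp [smul_eq_mul]
    have hwj0 : B.mulVec w j0 = 0 := by rw [hBw, ← hc]; ring
    have hw0 : w = 0 := by
      by_contra hw0
      apply hmin
      refine ⟨w, hAw, hw0, ?_⟩
      constructor
      · intro j hj
        simp only [Set.mem_setOf_eq] at *
        intro hgj
        apply hj
        rw [hBw, hgj, hsupp j hgj]
        ring
      · intro hcon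
        have := hcon hj0
        simp only [Set.mem_setOf_eq] at this
        exact this hwj0
    have : c • x = (B.mulVec x j0) • g := by
      have := sub_eq_zero.mp (hw ▸ hw0 : c • x - (B.mulVec x j0) • g = 0)
      exact this
    refine ⟨B.mulVec x j0 / c, ?_⟩
    funext l
    have hl := congrFun this l
    simp only [Pi.smul_apply, smul_eq_mul] at hl ⊢
    field_simp
    linarith [hl]
  -- the normalized vector h
  set h : Fin n → ℝ := c⁻¹ • g with hh
  have hgch : g = c • h := by rw [hh, smul_smul, mul_inv_cancel₀ hj0, one_smul]
  have hAh : A.mulVec h = 0 := by rw [hh, Matrix.mulVec_smul, hAg]; simp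
  have hBh : ∀ j, B.mulVec h j = c⁻¹ * B.mulVec g j := by
    intro j; rw [hh, Matrix.mulVec_smul]; simp [smul_eq_mul]
  have hBhj0 : B.mulVec h j0 = 1 := by rw [hBh, ← hc, inv_mul_cancel₀ hj0]
  have hh0 : h ≠ 0 := by
    intro h0
    exact hg0 (by rw [hgch, h0, smul_zero])
  -- the matrix N
  set ι : Type := Fin mA ⊕ {j : Fin mB // B.mulVec g j = 0 ∨ j = j0} with hι
  haveI : Fintype ι := by rw [hι]; infer_instance
  set ρ : ι → Fin mA ⊕ Fin mB := Sum.map id Subtype.val with hρ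
  have hρinj : Function.Injective ρ := Sum.map_injective.mpr ⟨fun a b h => h, Subtype.val_injective⟩
  set N : Matrix ι (Fin n) ℝ := (Matrix.fromRows A B).submatrix ρ id with hN
  have hNmul : ∀ (x : Fin n → ℝ) (idx : ι),
      N.mulVec x idx = Sum.elim (A.mulVec x) (B.mulVec x) (ρ idx) := by
    intro x idx
    rw [← Matrix.fromRows_mulVec]
    rfl
  have hNker : ∀ x, N.mulVec x = 0 → x = 0 := by
    intro x hx
    have hAx : A.mulVec x = 0 := by
      funext i
      have := congrFun hx (Sum.inl i)
      rw [hNmul] at this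
      simpa [hρ] using this
    have hBx : ∀ j, B.mulVec g j = 0 → B.mulVec x j = 0 := by
      intro j hj
      have := congrFun hx (Sum.inr ⟨j, Or.inl hj⟩)
      rw [hNmul] at this
      simpa [hρ] using this
    obtain ⟨t, ht⟩ := span1 x hAx hBx
    have hxj0 : B.mulVec x j0 = 0 := by
      have := congrFun hx (Sum.inr ⟨j0, Or.inr rfl⟩)
      rw [hNmul] at this
      simpa [hρ] using this
    have : t * c = 0 := by
      rw [ht, Matrix.mulVec_smul] at hxj0
      simpa [smul_eq_mul, ← hc] using hxj0
    rcases mul_eq_zero.mp this with ht0 | hc0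
    · rw [ht, ht0, zero_smul]
    · exact absurd hc0 hj0
  obtain ⟨f, hfinj, hfdet⟩ := exists_good_submatrix N hNker
  set Q : Matrix (Fin n) (Fin n) ℝ := N.submatrix f id with hQ
  -- Q is TU
  have hQTU : Q.IsTotallyUnimodular := by
    rw [hQ, hN, Matrix.submatrix_submatrix]
    exact hTU.submatrix _ _
  have hQdet : Q.det ∈ Set.range SignType.cast := by
    rw [hQ, hN, Matrix.submatrix_submatrix]
    exact hTU n (ρ ∘ f) (id ∘ id) (hρinj.comp hfinj) Function.injective_id
  have hQdet1 : Q.det = 1 ∨ Q.det = -1 := by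
    obtain ⟨s, hs⟩ := hQdet
    cases s with
    | zero => exact absurd hs.symm (by simpa using hfdet)
    | pos => left; rw [← hs]; simp
    | neg => right; rw [← hs]; simp
  -- r = Q h
  set r : Fin n → ℝ := Q.mulVec h with hr
  have hrk : ∀ k, r k = Sum.elim (A.mulVec h) (B.mulVec h) (ρ (f k)) := by
    intro k
    rw [hr, hQ]
    have : (N.submatrix f id).mulVec h k = N.mulVec h (f k) := rfl
    rw [this, hNmul]
  have hcram : Q.cramer r = Q.det • h := by
    have h1 : Q.mulVec (Q.cramer r) = Q.det • r := Matrix.mulVec_cramer Q r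
    have h2 : Q.mulVec (Q.det • h) = Q.det • r := by
      rw [Matrix.mulVec_smul, hr]
    have h3 : Q.mulVec (Q.cramer r - Q.det • h) = 0 := by
      rw [Matrix.mulVec_sub, h1, h2, sub_self]
    have := Matrix.eq_zero_of_mulVec_eq_zero hfdet h3
    exact sub_eq_zero.mp this
  have hint : ∀ l, ∃ z : ℤ, h l = (z : ℝ) := by
    intro l
    have hdetl : (Q.updateCol l r).det = Q.det * h l := by
      have h4 := congrFun hcram l
      rw [Matrix.cramer_apply] at h4
      simpa [smul_eq_mul] using h4
    have hupdet : (Q.updateCol l r).det ∈ Set.range SignType.cast := by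
      by_cases hex : ∃ k0, ρ (f k0) = Sum.inr j0
      · obtain ⟨k0, hk0⟩ := hex
        have hrval : ∀ k, r k = if k = k0 then 1 else 0 := by
          intro k
          by_cases hkk : k = k0
          · subst hkk
            rw [hrk, hk0]
            simp [hBhj0]
          · rw [hrk]
            simp only [if_neg hkk]
            rcases hfk : f k with iA | jj
            · simp [hρ, hAh]
            · obtain ⟨j, hj⟩ := jj
              rcases hj with hj0' | hjeq
              · simp [hρ, hBh, hj0']
              · exfalso
                apply hkk
                apply hfinj
                apply hρinj
                rw [hk0, hfk]
                simp [hρ, hjeq]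
        have hmat : Q.updateCol l r =
            (Matrix.fromCols Q (1 : Matrix (Fin n) (Fin n) ℝ)).submatrix id
              (fun col => if col = l then Sum.inr k0 else Sum.inl col) := by
          ext i j
          by_cases hjl : j = l
          · simp [Matrix.updateCol_apply, hjl, hrval, Matrix.one_apply]
          · simp [Matrix.updateCol_apply, hjl]
        rw [hmat]
        have hTU2 : (Matrix.fromCols Q (1 : Matrix (Fin n) (Fin n) ℝ)).IsTotallyUnimodular :=
          (Matrix.fromCols_one_isTotallyUnimodular_iff Q).mpr hQTU
        apply hTU2 n id _ Function.injective_id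
        intro c1 c2 hcc
        by_cases h1 : c1 = l <;> by_cases h2 : c2 = l
        · rw [h1, h2]
        · simp [h1, h2] at hcc
        · simp [h1, h2] at hcc
        · simpa [h1, h2] using hcc
      · exfalso
        have hrval : r = 0 := by
          funext k
          rw [hrk]
          rcases hfk : f k with iA | jj
          · simp [hρ, hAh]
          · obtain ⟨j, hj⟩ := jj
            rcases hj with hj0' | hjeq
            · simp [hρ, hBh, hj0']
            · exfalso
              apply hex
              refine ⟨k, ?_⟩
              rw [hfk]
              simp [hρ, hjeq]
        have : Q.det • h = 0 := by
          rw [← hcram, hrval]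
          exact map_zero _
        rcases smul_eq_zero.mp this with h0 | h0
        · exact hfdet h0
        · exact hh0 h0
    obtain ⟨s, hs⟩ := hupdet
    have hsz : ∃ z : ℤ, (s : ℝ) = (z : ℝ) := by
      cases s
      · exact ⟨0, by simp⟩
      · exact ⟨-1, by simp⟩
      · exact ⟨1, by simp⟩
    obtain ⟨z, hz⟩ := hsz
    rcases hQdet1 with hd | hd
    · refine ⟨z, ?_⟩
      have : (Q.updateCol l r).det = h l := by rw [hdetl, hd, one_mul]
      rw [← this, ← hs, hz]
    · refine ⟨-z, ?_⟩
      have : (Q.updateCol l r).det = -(h l) := by rw [hdetl, hd]; ring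
      have h5 : h l = -(Q.updateCol l r).det := by rw [this]; ring
      rw [h5, ← hs, hz]
      push_cast
      ring
  choose hzf hzspec using hint
  refine ⟨hzf, fun l => ?_⟩
  have : g l = c * h l := by rw [hgch]; simp [smul_eq_mul]
  rw [this, hzspec l]
  ring

variable {mA mB n : ℕ} {A : Matrix (Fin mA) (Fin n) ℝ} {b : Fin mA → ℝ}
  {B : Matrix (Fin mB) (Fin n) ℝ} {d : Fin mB → ℝ}

lemma mulVec_lin (M : Matrix (Fin mB) (Fin n) ℝ) (x z : Fin n → ℝ) (t : ℝ) (j : Fin mB) :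
    M.mulVec (x + t • z) j = M.mulVec x j + t * M.mulVec z j := by
  rw [Matrix.mulVec_add, Matrix.mulVec_smul]
  simp

lemma extreme_of_no_dir {x : Fin n → ℝ} (hx : x ∈ PolyAB A b B d)
    (hnodir : ∀ z, A.mulVec z = 0 → (∀ j, B.mulVec x j = d j → B.mulVec z j = 0) → z = 0) :
    x ∈ (PolyAB A b B d).extremePoints ℝ := by
  rw [mem_extremePoints]
  refine ⟨hx, ?_⟩
  intro x₁ hx₁ x₂ hx₂ hseg
  obtain ⟨a, a2, ha, ha2, hab, hsum⟩ := hseg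
  have key : ∀ j, B.mulVec x j = d j → B.mulVec x₁ j = d j ∧ B.mulVec x₂ j = d j := by
    intro j hj
    have h1 : B.mulVec x₁ j ≤ d j := hx₁.2 j
    have h2 : B.mulVec x₂ j ≤ d j := hx₂.2 j
    have h3 : a * B.mulVec x₁ j + a2 * B.mulVec x₂ j = d j := by
      have : B.mulVec (a • x₁ + a2 • x₂) j = a * B.mulVec x₁ j + a2 * B.mulVec x₂ j := by
        rw [Matrix.mulVec_add, Matrix.mulVec_smul, Matrix.mulVec_smul]
        simp
      rw [← this, hsum, hj]
    have hd : a * d j + a2 * d j = d j := by rw [← add_mul, hab, one_mul]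
    constructor
    · by_contra hlt'
      have hl : B.mulVec x₁ j < d j := lt_of_le_of_ne h1 hlt'
      linarith [mul_lt_mul_of_pos_left hl ha, mul_le_mul_of_nonneg_left h2 ha2.le]
    · by_contra hlt'
      have hl : B.mulVec x₂ j < d j := lt_of_le_of_ne h2 hlt'
      linarith [mul_lt_mul_of_pos_left hl ha2, mul_le_mul_of_nonneg_left h1 ha.le]
  have hz : ∀ w : Fin n → ℝ, w ∈ PolyAB A b B d →
      (∀ j, B.mulVec x j = d j → B.mulVec w j = d j) → w = x := by
    intro w hw hwt
    have h0 : w - x = 0 := by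
      apply hnodir
      · rw [Matrix.mulVec_sub, hw.1, hx.1, sub_self]
      · intro j hj
        rw [Matrix.mulVec_sub]
        simp only [Pi.sub_apply]
        rw [hwt j hj, hj, sub_self]
    have := sub_eq_zero.mp h0
    exact this
  exact ⟨hz x₁ hx₁ fun j hj => (key j hj).1, hz x₂ hx₂ fun j hj => (key j hj).2⟩

lemma tight_improve {x : Fin n → ℝ} (hx : x ∈ PolyAB A b B d) {z : Fin n → ℝ}
    (hAz : A.mulVec z = 0)
    (htight : ∀ j, B.mulVec x j = d j → B.mulVec z j = 0)
    (hpos : ∃ j, 0 < B.mulVec z j) :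
    ∃ x' ∈ PolyAB A b B d, (∀ j, B.mulVec x j = d j → B.mulVec x' j = d j) ∧
      (Finset.univ.filter fun j => B.mulVec x' j ≠ d j).card <
        (Finset.univ.filter fun j => B.mulVec x j ≠ d j).card := by
  classical
  obtain ⟨j1, hj1⟩ := hpos
  set J : Finset (Fin mB) := Finset.univ.filter (fun j => 0 < B.mulVec z j) with hJ
  have hJne : J.Nonempty := ⟨j1, by simp [hJ, hj1]⟩
  obtain ⟨jm, hjmJ, hjm⟩ := J.exists_min_image (fun j => (d j - B.mulVec x j) / B.mulVec z j) hJne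
  have hjmpos : 0 < B.mulVec z jm := (Finset.mem_filter.mp hjmJ).2
  have hjm_slack : B.mulVec x jm < d jm := by
    rcases lt_or_eq_of_le (hx.2 jm) with h | h
    · exact h
    · exact absurd (htight jm h) (ne_of_gt hjmpos)
  set t : ℝ := (d jm - B.mulVec x jm) / B.mulVec z jm with hts
  have ht : 0 < t := div_pos (by linarith) hjmpos
  refine ⟨x + t • z, ⟨?_, ?_⟩, ?_, ?_⟩
  · rw [Matrix.mulVec_add, Matrix.mulVec_smul, hAz, hx.1]
    simp
  · intro j
    rw [mulVec_lin]
    rcases le_or_gt (B.mulVec z j) 0 with h | h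
    · nlinarith [hx.2 j]
    · have hjJ : j ∈ J := by simp [hJ, h]
      have h2 : t * B.mulVec z j ≤ d j - B.mulVec x j := by
        have := hjm j hjJ
        rw [le_div_iff₀ h] at this
        linarith
      linarith
  · intro j hj
    rw [mulVec_lin, htight j hj, hj]
    ring
  · apply Finset.card_lt_card
    constructor
    · intro j hj
      simp only [Finset.mem_filter, Finset.mem_univ, true_and] at hj ⊢
      intro hxj
      apply hj
      rw [mulVec_lin, htight j hxj, hxj]
      ring
    · intro hsup
      have hjm_new : B.mulVec (x + t • z) jm = d jm := by
        rw [mulVec_lin, hts, div_mul_cancel₀ _ (ne_of_gt hjmpos)]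
        ring
      have h1 : jm ∈ Finset.univ.filter fun j => B.mulVec x j ≠ d j := by
        simp [ne_of_lt hjm_slack]
      have h2 := hsup h1
      simp only [Finset.mem_filter, Finset.mem_univ, true_and] at h2
      exact h2 hjm_new

lemma exists_vertex_tight
    (hker : ∀ z, A.mulVec z = 0 → B.mulVec z = 0 → z = 0) :
    ∀ (N : ℕ) (x : Fin n → ℝ), x ∈ PolyAB A b B d →
      (Finset.univ.filter fun j => B.mulVec x j ≠ d j).card ≤ N →
      ∃ v ∈ (PolyAB A b B d).extremePoints ℝ,
        ∀ j, B.mulVec x j = d j → B.mulVec v j = d j := by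
  classical
  intro N
  induction N with
  | zero =>
    intro x hx hcard
    refine ⟨x, ?_, fun j hj => hj⟩
    apply extreme_of_no_dir hx
    intro z hAz htight
    apply hker z hAz
    funext j
    have : B.mulVec x j = d j := by
      by_contra hne
      have : j ∈ Finset.univ.filter fun j => B.mulVec x j ≠ d j := by simp [hne]
      rw [Finset.card_eq_zero.mp (Nat.le_zero.mp hcard)] at this
      exact absurd this (Finset.notMem_empty j)
    simpa using htight j this
  | succ N ih =>
    intro x hx hcard
    by_cases hdir : ∃ z, z ≠ 0 ∧ A.mulVec z = 0 ∧ ∀ j, B.mulVec x j = d j → B.mulVec z j = 0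
    · obtain ⟨z, hz0, hAz, htight⟩ := hdir
      have hBz : B.mulVec z ≠ 0 := fun h => hz0 (hker z hAz h)
      have hj1 : ∃ j, B.mulVec z j ≠ 0 := by
        by_contra hno
        push_neg at hno
        exact hBz (funext hno)
      obtain ⟨j1, hj1⟩ := hj1
      have step : ∃ x' ∈ PolyAB A b B d,
          (∀ j, B.mulVec x j = d j → B.mulVec x' j = d j) ∧
          (Finset.univ.filter fun j => B.mulVec x' j ≠ d j).card <
            (Finset.univ.filter fun j => B.mulVec x j ≠ d j).card := by
        rcases lt_or_gt_of_ne hj1 with h | h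
        · apply tight_improve hx (z := -z)
          · rw [Matrix.mulVec_neg, hAz, neg_zero]
          · intro j hj
            rw [Matrix.mulVec_neg]
            simp [htight j hj]
          · refine ⟨j1, ?_⟩
            rw [Matrix.mulVec_neg]
            simpa using h
        · exact tight_improve hx hAz htight ⟨j1, h⟩
      obtain ⟨x', hx', htight', hlt⟩ := step
      obtain ⟨v, hv, hvt⟩ := ih x' hx' (by omega)
      exact ⟨v, hv, fun j hj => hvt j (htight' j hj)⟩
    · refine ⟨x, ?_, fun j hj => hj⟩
      apply extreme_of_no_dir hx
      intro z hAz htight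
      by_contra hz0
      exact hdir ⟨z, hz0, hAz, htight⟩

lemma max_step {y g : Fin n → ℝ} {α : ℝ} (hAg : A.mulVec g = 0)
    (hy' : y + α • g ∈ PolyAB A b B d)
    (hmax : ∀ β : ℝ, α < β → y + β • g ∉ PolyAB A b B d) :
    ∃ j, 0 < B.mulVec g j ∧ B.mulVec (y + α • g) j = d j := by
  classical
  by_contra hno
  push_neg at hno
  have hstrict : ∀ j, 0 < B.mulVec g j → B.mulVec (y + α • g) j < d j := fun j hj =>
    lt_of_le_of_ne (hy'.2 j) (hno j hj)
  have hAmem : ∀ β : ℝ, A.mulVec (y + β • g) = b := by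
    intro β
    rw [Matrix.mulVec_add, Matrix.mulVec_smul, hAg]
    have := hy'.1
    rw [Matrix.mulVec_add, Matrix.mulVec_smul, hAg] at this
    simpa using this
  set J : Finset (Fin mB) := Finset.univ.filter (fun j => 0 < B.mulVec g j) with hJ
  by_cases hJne : J.Nonempty
  · obtain ⟨jm, hjmJ, hjm⟩ := J.exists_min_image
      (fun j => (d j - B.mulVec (y + α • g) j) / B.mulVec g j) hJne
    have hjmpos : 0 < B.mulVec g jm := (Finset.mem_filter.mp hjmJ).2
    set ε : ℝ := (d jm - B.mulVec (y + α • g) jm) / B.mulVec g jm with hε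
    have hεpos : 0 < ε := div_pos (by linarith [hstrict jm hjmpos]) hjmpos
    apply hmax (α + ε) (by linarith)
    refine ⟨hAmem _, ?_⟩
    intro j
    have e1 : B.mulVec (y + (α + ε) • g) j = B.mulVec y j + (α + ε) * B.mulVec g j :=
      mulVec_lin B y g (α + ε) j
    have e2 : B.mulVec (y + α • g) j = B.mulVec y j + α * B.mulVec g j :=
      mulVec_lin B y g α j
    rcases le_or_gt (B.mulVec g j) 0 with h | h
    · have : (α + ε) * B.mulVec g j ≤ α * B.mulVec g j := by nlinarith
      have := hy'.2 j
      linarith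
    · have hjJ : j ∈ J := by simp [hJ, h]
      have h3 := hjm j hjJ
      rw [le_div_iff₀ h] at h3
      linarith
  · apply hmax (α + 1) (by linarith)
    refine ⟨hAmem _, ?_⟩
    intro j
    have hle : B.mulVec g j ≤ 0 := by
      by_contra hgt
      exact hJne ⟨j, by simp [hJ, lt_of_not_ge hgt]⟩
    have e1 : B.mulVec (y + (α + 1) • g) j = B.mulVec y j + (α + 1) * B.mulVec g j :=
      mulVec_lin B y g (α + 1) j
    have e2 : B.mulVec (y + α • g) j = B.mulVec y j + α * B.mulVec g j :=
      mulVec_lin B y g α j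
    have := hy'.2 j
    nlinarith

lemma B_entry_int (hTU : (Matrix.fromRows A B).IsTotallyUnimodular) :
    ∀ i j, ∃ z : ℤ, B i j = (z : ℝ) := by
  intro i j
  obtain ⟨s, hs⟩ := hTU.apply (Sum.inr i) j
  rw [Matrix.fromRows_apply_inr] at hs
  cases s
  · exact ⟨0, by rw [← hs]; simp⟩
  · exact ⟨-1, by rw [← hs]; simp⟩
  · exact ⟨1, by rw [← hs]; simp⟩

lemma mulVec_int (B' : Matrix (Fin mB) (Fin n) ℝ) (hB : ∀ i j, ∃ z : ℤ, B' i j = (z : ℝ))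
    (v : Fin n → ℝ) (hv : ∀ l, ∃ z : ℤ, v l = (z : ℝ)) (j : Fin mB) :
    ∃ z : ℤ, B'.mulVec v j = (z : ℝ) := by
  choose zB hzB using hB
  choose zv hzv using hv
  refine ⟨∑ l, zB j l * zv l, ?_⟩
  rw [Matrix.mulVec, dotProduct]
  push_cast
  exact Finset.sum_congr rfl fun l _ => by rw [hzB, hzv]

theorem circuit_walks_integral_of_totallyUnimodular
    {mA mB n : ℕ} (A : Matrix (Fin mA) (Fin n) ℝ) (b : Fin mA → ℝ)
    (B : Matrix (Fin mB) (Fin n) ℝ) (d : Fin mB → ℝ)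
    (hpointed : ((PolyAB A b B d).extremePoints ℝ).Nonempty)
    (hintegral : ∀ v ∈ (PolyAB A b B d).extremePoints ℝ, ∀ j, ∃ z : ℤ, v j = (z : ℝ))
    (hTU : (Matrix.fromRows A B).IsTotallyUnimodular) :
    ∀ (k : ℕ) (y : Fin (k + 1) → Fin n → ℝ),
      IsCircuitWalk (PolyAB A b B d) (IsCircuit A B) y → IsIntegralWalk y := by
  classical
  intro k y hwalk
  have hmemP : ∀ i : Fin (k + 1), y i ∈ PolyAB A b B d := by
    intro i
    rcases Fin.eq_castSucc_or_eq_last i with ⟨j, rfl⟩ | rfl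
    · exact (hwalk.2.2 j).1
    · exact extremePoints_subset hwalk.2.1
  obtain ⟨v0, hv0⟩ := hpointed
  have hker : ∀ z, A.mulVec z = 0 → B.mulVec z = 0 → z = 0 := by
    intro z hAz hBz
    by_contra hz0
    rw [mem_extremePoints] at hv0
    have hv0P := hv0.1
    have h1 : v0 + z ∈ PolyAB A b B d := by
      constructor
      · rw [Matrix.mulVec_add, hAz, add_zero]; exact hv0P.1
      · intro j
        rw [Matrix.mulVec_add, hBz]
        simpa using hv0P.2 j
    have h2 : v0 - z ∈ PolyAB A b B d := by
      constructor
      · rw [Matrix.mulVec_sub, hAz, sub_zero]; exact hv0P.1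
      · intro j
        rw [Matrix.mulVec_sub, hBz]
        simpa using hv0P.2 j
    have hseg : v0 ∈ openSegment ℝ (v0 - z) (v0 + z) := by
      refine ⟨1/2, 1/2, by norm_num, by norm_num, by norm_num, ?_⟩
      funext l
      simp only [Pi.add_apply, Pi.smul_apply, Pi.sub_apply, smul_eq_mul]
      ring
    have := (hv0.2 _ h2 _ h1 hseg).1
    apply hz0
    have h3 : v0 - z = v0 := this
    have := sub_eq_self.mp h3
    exact this
  have hBint := B_entry_int hTU
  have step : ∀ i : Fin k, (∀ l, ∃ z : ℤ, y i.castSucc l = (z : ℝ)) →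
      (∀ l, ∃ z : ℤ, y i.succ l = (z : ℝ)) := by
    intro i hyint
    obtain ⟨hmem, g, α, hcirc, hα, hstep, hmaxi⟩ := hwalk.2.2 i
    obtain ⟨hAg, hg0, hcop, hmin⟩ := hcirc
    have hy' : y i.castSucc + α • g ∈ PolyAB A b B d := by
      rw [← hstep]; exact hmemP i.succ
    obtain ⟨j0, hj0pos, hj0tight⟩ := max_step hAg hy' hmaxi
    obtain ⟨v, hv, hvt⟩ := exists_vertex_tight hker
      ((Finset.univ.filter fun j =>
        B.mulVec (y i.castSucc + α • g) j ≠ d j).card) _ hy' le_rfl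
    obtain ⟨zd, hzd⟩ : ∃ z : ℤ, d j0 = (z : ℝ) := by
      have h1 := hvt j0 hj0tight
      obtain ⟨z, hz⟩ := mulVec_int B hBint v (hintegral v hv) j0
      exact ⟨z, by rw [← h1, hz]⟩
    obtain ⟨zy, hzy⟩ := mulVec_int B hBint _ hyint j0
    have hstepval : α * B.mulVec g j0 = d j0 - B.mulVec (y i.castSucc) j0 := by
      have h4 := hj0tight
      rw [mulVec_lin] at h4
      linarith
    obtain ⟨hz, hhz⟩ := circuit_ratio_int hTU hker hAg hg0 hmin (ne_of_gt hj0pos)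
    intro l
    obtain ⟨zl, hzl⟩ := hyint l
    refine ⟨zl + (zd - zy) * hz l, ?_⟩
    have h5 : y i.succ l = y i.castSucc l + α * g l := by rw [hstep]; simp
    have h6 : α * g l = ((zd : ℝ) - zy) * hz l := by
      rw [hhz l, show α * ((hz l : ℝ) * B.mulVec g j0) = (α * B.mulVec g j0) * hz l from by ring,
        hstepval, hzd, hzy]
    rw [h5, hzl, h6]
    push_cast
    ring
  have main : ∀ (m : ℕ) (hm : m < k + 1), ∀ l, ∃ z : ℤ, y ⟨m, hm⟩ l = (z : ℝ) := by
    intro m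
    induction m with
    | zero =>
      intro hm l
      exact hintegral _ hwalk.1 l
    | succ m ih =>
      intro hm l
      have hmk : m < k := by omega
      exact step ⟨m, hmk⟩ (fun l' => ih (by omega) l') l
  intro i l
  have := main i.val i.isLt l
  simpa using this
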